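/- Let p and q be distinct primes, α and β positive integers, and n = p^α q^β. Let r denote the number of units u of ℤ_n with u² = 1, and write φ = φ(n) for Euler's totient of n. Then the Sombor index of Cl₂(ℤ_n) equals (3/2)·√2·(φ − r) + 2r·√(4 + (1 + φ)²) + 2(φ − r)·√(9 + (2 + φ)²) + √2·(φ − r)·(2 + φ)·(φ − r + 1) + r²·√2·(1 + φ) + 2r(φ − r)·√(2φ² + 6φ + 5). -/

import Mathlib

/-- The clean graph `Cl₂(R)`: vertices are pairs `(e, u)` where `e` is a nonzero
idempotent of `R` and `u` is a unit of `R`; two distinct vertices `(e, u)` and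
`(f, v)` are adjacent iff `e * f = 0` or `u * v = 1`. -/
def Cl2 (R : Type*) [CommRing R] :
    SimpleGraph ({e : R // IsIdempotentElem e ∧ e ≠ 0} × Rˣ) where
  Adj v w := v ≠ w ∧ (((v.1 : R) * (w.1 : R) = 0) ∨ ((v.2 : R) * (w.2 : R) = 1))
  symm := by
    refine ⟨?_⟩
    rintro v w ⟨hne, h⟩
    refine ⟨hne.symm, ?_⟩
    rcases h with h | h
    · left; rwa [mul_comm]
    · right; rwa [mul_comm]
  loopless := by refine ⟨?_⟩; rintro v ⟨h, -⟩; exact h rfl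

/-- The Sombor index of a graph: the sum over edges `uv` of
`√(deg(u)² + deg(v)²)`. -/
noncomputable def somborIndex {V : Type*} (G : SimpleGraph V) : ℝ :=
  ∑ᶠ e ∈ G.edgeSet,
    Sym2.lift
      ⟨fun u v =>
        Real.sqrt (((G.neighborSet u).ncard : ℝ) ^ 2 + ((G.neighborSet v).ncard : ℝ) ^ 2),
        fun u v => by simp [add_comm]⟩ e



lemma zmod_pp_idem {p k : ℕ} (hp : p.Prime) (hk : 0 < k) (x : ZMod (p ^ k))
    (hx : x * x = x) : x = 0 ∨ x = 1 := by
  haveI : NeZero (p ^ k) := ⟨pow_ne_zero k hp.pos.ne'⟩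
  set a : ℤ := (x.val : ℤ) with ha
  have hax : ((a : ℤ) : ZMod (p ^ k)) = x := by
    simp [ha, ZMod.natCast_val, ZMod.cast_id]
  have hdvd : ((p : ℤ) ^ k) ∣ a * (a - 1) := by
    have : ((a * (a - 1) : ℤ) : ZMod (p ^ k)) = 0 := by
      push_cast; rw [hax]; linear_combination hx
    rw [ZMod.intCast_zmod_eq_zero_iff_dvd] at this
    exact_mod_cast this
  have hpZ : Prime (p : ℤ) := Nat.prime_iff_prime_int.mp hp
  by_cases hpa : (p : ℤ) ∣ a
  · have h2 : ¬ (p : ℤ) ∣ (a - 1) := by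
      intro h
      have : (p : ℤ) ∣ 1 := by
        have := dvd_sub hpa h; simpa using this
      exact hpZ.not_dvd_one this
    have hcop : IsCoprime ((p : ℤ) ^ k) (a - 1) :=
      (IsCoprime.pow_left ((hpZ.coprime_iff_not_dvd).mpr h2))
    left
    have : ((p:ℤ)^k) ∣ a := hcop.dvd_of_dvd_mul_right hdvd
    rw [← hax, ZMod.intCast_zmod_eq_zero_iff_dvd]
    exact_mod_cast this
  · have hcop : IsCoprime ((p : ℤ) ^ k) a :=
      (IsCoprime.pow_left ((hpZ.coprime_iff_not_dvd).mpr hpa))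
    right
    have hd : ((p:ℤ)^k) ∣ (a - 1) := hcop.dvd_of_dvd_mul_left hdvd
    have h0 : (((a - 1 : ℤ)) : ZMod (p^k)) = 0 := by
      rw [ZMod.intCast_zmod_eq_zero_iff_dvd]; exact_mod_cast hd
    push_cast at h0
    rw [hax] at h0
    linear_combination h0

open Finset in
lemma two_mul_sum_edges {V : Type*} [Fintype V] [DecidableEq V] (G : SimpleGraph V)
    [DecidableRel G.Adj] (g : Sym2 V → ℝ) :
    2 * ∑ e ∈ G.edgeFinset, g e = ∑ v, ∑ w : G.neighborSet v, g s(v, (w : V)) := by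
  have h1 : ∀ v : V, ∑ w : G.neighborSet v, g s(v, (w : V))
      = ∑ d ∈ ({d : G.Dart | d.fst = v} : Finset _), g d.edge := by
    intro v
    rw [SimpleGraph.dart_fst_fiber,
      Finset.sum_image (fun a _ b _ h => G.dartOfNeighborSet_injective v h)]
    rfl
  simp_rw [h1]
  rw [Finset.sum_fiberwise (Finset.univ : Finset G.Dart) (fun d => d.fst)
    (fun d => g d.edge)]
  rw [← Finset.sum_fiberwise_of_maps_to (t := G.edgeFinset) (g := fun d : G.Dart => d.edge)
    (fun d _ => by rw [SimpleGraph.mem_edgeFinset]; exact d.edge_mem) (fun d => g d.edge)]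
  rw [Finset.mul_sum]
  refine Finset.sum_congr rfl fun e he => ?_
  have : ∀ d ∈ ({d : G.Dart | d.edge = e} : Finset _), g d.edge = g e := by
    intro d hd; rw [Finset.mem_filter] at hd; rw [hd.2]
  rw [Finset.sum_congr rfl this, Finset.sum_const,
    G.dart_edge_fiber_card e (SimpleGraph.mem_edgeFinset.mp he), nsmul_eq_mul]
  norm_num



instance Cl2.decAdj (R : Type*) [CommRing R] [DecidableEq R] :
    DecidableRel (Cl2 R).Adj := fun v w =>
  decidable_of_iff (v ≠ w ∧ (((v.1 : R) * (w.1 : R) = 0) ∨ ((v.2 : R) * (w.2 : R) = 1)))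
    Iff.rfl

/-- Abbreviation for the vertex "idempotent part" type. -/
abbrev NzIdem (R : Type*) [CommRing R] := {e : R // IsIdempotentElem e ∧ e ≠ 0}

structure Cl2Setup (R : Type*) [CommRing R] where
  e : R
  f : R
  he : IsIdempotentElem e
  hf : IsIdempotentElem f
  he0 : e ≠ 0
  hf0 : f ≠ 0
  he1 : e ≠ 1
  hf1 : f ≠ 1
  hef : e ≠ f
  hef0 : e * f = 0
  hclass : ∀ x : R, IsIdempotentElem x → x ≠ 0 → x = 1 ∨ x = e ∨ x = f

namespace Cl2Setup

variable {R : Type*} [CommRing R]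

lemma one_ne_zero' (S : Cl2Setup R) : (1 : R) ≠ 0 :=
  fun h => S.he0 (by rw [← mul_one S.e, h, mul_zero])

def i1 (S : Cl2Setup R) : NzIdem R := ⟨1, IsIdempotentElem.one, S.one_ne_zero'⟩
def ie (S : Cl2Setup R) : NzIdem R := ⟨S.e, S.he, S.he0⟩
def jf (S : Cl2Setup R) : NzIdem R := ⟨S.f, S.hf, S.hf0⟩

def swap (S : Cl2Setup R) : Cl2Setup R where
  e := S.f
  f := S.e
  he := S.hf
  hf := S.he
  he0 := S.hf0
  hf0 := S.he0
  he1 := S.hf1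
  hf1 := S.he1
  hef := S.hef.symm
  hef0 := by rw [mul_comm]; exact S.hef0
  hclass := fun x hx hx0 => by rcases S.hclass x hx hx0 with h|h|h <;> tauto

variable (S : Cl2Setup R)

@[simp] lemma coe_i1 : ((S.i1 : NzIdem R) : R) = 1 := rfl
@[simp] lemma coe_ie : ((S.ie : NzIdem R) : R) = S.e := rfl
@[simp] lemma coe_jf : ((S.jf : NzIdem R) : R) = S.f := rfl

@[simp] lemma swap_ie : S.swap.ie = S.jf := rfl
@[simp] lemma swap_jf : S.swap.jf = S.ie := rfl
@[simp] lemma swap_i1 : S.swap.i1 = S.i1 := rfl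

lemma i1_ne_ie : S.i1 ≠ S.ie := fun h => S.he1 (congrArg Subtype.val h).symm
lemma i1_ne_jf : S.i1 ≠ S.jf := fun h => S.hf1 (congrArg Subtype.val h).symm
lemma ie_ne_jf : S.ie ≠ S.jf := fun h => S.hef (congrArg Subtype.val h)

lemma classify (j : NzIdem R) : j = S.i1 ∨ j = S.ie ∨ j = S.jf := by
  rcases S.hclass j.1 j.2.1 j.2.2 with h|h|h
  · exact Or.inl (Subtype.ext h)
  · exact Or.inr (Or.inl (Subtype.ext h))
  · exact Or.inr (Or.inr (Subtype.ext h))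

lemma emul_eq_zero_iff (j : NzIdem R) : S.e * (j : R) = 0 ↔ j = S.jf := by
  constructor
  · intro h
    rcases S.classify j with rfl|rfl|rfl
    · rw [coe_i1, mul_one] at h; exact absurd h S.he0
    · rw [coe_ie, S.he.eq] at h; exact absurd h S.he0
    · rfl
  · rintro rfl; exact S.hef0

lemma onemul_ne_zero (j : NzIdem R) : (1 : R) * (j : R) ≠ 0 := by
  rw [one_mul]; exact j.2.2

lemma units_mul_eq_one_iff (u v : Rˣ) : ((u : R) * (v : R) = 1) ↔ v = u⁻¹ := by
  rw [← Units.val_mul, ← Units.val_one, Units.val_inj, mul_eq_one_iff_inv_eq, eq_comm]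


lemma adj_iff (a b : NzIdem R × Rˣ) :
    (Cl2 R).Adj a b ↔ a ≠ b ∧ (((a.1 : R) * (b.1 : R) = 0) ∨ ((a.2 : R) * (b.2 : R) = 1)) :=
  Iff.rfl

lemma nbhd_i1_self (u : Rˣ) (hu : u⁻¹ = u) :
    (Cl2 R).neighborSet (S.i1, u) = {(S.ie, u), (S.jf, u)} := by
  ext ⟨j, v⟩
  simp only [SimpleGraph.mem_neighborSet, adj_iff, Set.mem_insert_iff, Set.mem_singleton_iff,
    coe_i1, coe_ie, coe_jf]
  constructor
  · rintro ⟨hne, h | h⟩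
    · exact absurd h (onemul_ne_zero j)
    · rw [units_mul_eq_one_iff, hu] at h
      subst h
      rcases S.classify j with rfl | rfl | rfl
      · exact absurd rfl hne
      · exact Or.inl rfl
      · exact Or.inr rfl
  · rintro (h | h) <;> rw [Prod.mk.injEq] at h <;> obtain ⟨rfl, rfl⟩ := h
    · refine ⟨by simp [Prod.ext_iff, S.i1_ne_ie], Or.inr ?_⟩
      rw [units_mul_eq_one_iff, hu]
    · refine ⟨by simp [Prod.ext_iff, S.i1_ne_jf], Or.inr ?_⟩
      rw [units_mul_eq_one_iff, hu]

lemma nbhd_i1_ns (u : Rˣ) (hu : u⁻¹ ≠ u) :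
    (Cl2 R).neighborSet (S.i1, u) = {(S.i1, u⁻¹), (S.ie, u⁻¹), (S.jf, u⁻¹)} := by
  ext ⟨j, v⟩
  simp only [SimpleGraph.mem_neighborSet, adj_iff, Set.mem_insert_iff, Set.mem_singleton_iff,
    coe_i1, coe_ie, coe_jf]
  constructor
  · rintro ⟨hne, h | h⟩
    · exact absurd h (onemul_ne_zero j)
    · rw [units_mul_eq_one_iff] at h
      subst h
      rcases S.classify j with rfl | rfl | rfl
      · exact Or.inl rfl
      · exact Or.inr (Or.inl rfl)
      · exact Or.inr (Or.inr rfl)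
  · rintro (h | h | h) <;> rw [Prod.mk.injEq] at h <;> obtain ⟨rfl, rfl⟩ := h
    · exact ⟨by simp [Prod.ext_iff, Ne.symm hu], Or.inr ((units_mul_eq_one_iff u u⁻¹).mpr rfl)⟩
    · exact ⟨by simp [Prod.ext_iff, S.i1_ne_ie], Or.inr ((units_mul_eq_one_iff u u⁻¹).mpr rfl)⟩
    · exact ⟨by simp [Prod.ext_iff, S.i1_ne_jf], Or.inr ((units_mul_eq_one_iff u u⁻¹).mpr rfl)⟩

lemma nbhd_ie_self (u : Rˣ) (hu : u⁻¹ = u) :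
    (Cl2 R).neighborSet (S.ie, u) =
      Set.range (fun v : Rˣ => (S.jf, v)) ∪ {(S.i1, u)} := by
  ext ⟨j, v⟩
  simp only [SimpleGraph.mem_neighborSet, adj_iff, Set.mem_union, Set.mem_range,
    Set.mem_singleton_iff, coe_i1, coe_ie, coe_jf]
  constructor
  · rintro ⟨hne, h | h⟩
    · rw [S.emul_eq_zero_iff] at h
      subst h
      exact Or.inl ⟨v, rfl⟩
    · rw [units_mul_eq_one_iff] at h
      subst h
      rcases S.classify j with rfl | rfl | rfl
      · exact Or.inr (by rw [hu])
      · exact absurd (by rw [hu]) hne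
      · exact Or.inl ⟨u⁻¹, rfl⟩
  · rintro (⟨v', h⟩ | h) <;> rw [Prod.mk.injEq] at h <;> obtain ⟨rfl, rfl⟩ := h
    · exact ⟨by simp [Prod.ext_iff, S.ie_ne_jf], Or.inl S.hef0⟩
    · exact ⟨by simp [Prod.ext_iff, Ne.symm S.i1_ne_ie],
        Or.inr ((units_mul_eq_one_iff _ _).mpr hu.symm)⟩

lemma nbhd_ie_ns (u : Rˣ) (hu : u⁻¹ ≠ u) :
    (Cl2 R).neighborSet (S.ie, u) =
      Set.range (fun v : Rˣ => (S.jf, v)) ∪ {(S.i1, u⁻¹), (S.ie, u⁻¹)} := by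
  ext ⟨j, v⟩
  simp only [SimpleGraph.mem_neighborSet, adj_iff, Set.mem_union, Set.mem_range,
    Set.mem_insert_iff, Set.mem_singleton_iff, coe_i1, coe_ie, coe_jf]
  constructor
  · rintro ⟨hne, h | h⟩
    · rw [S.emul_eq_zero_iff] at h
      subst h
      exact Or.inl ⟨v, rfl⟩
    · rw [units_mul_eq_one_iff] at h
      subst h
      rcases S.classify j with rfl | rfl | rfl
      · exact Or.inr (Or.inl rfl)
      · exact Or.inr (Or.inr rfl)
      · exact Or.inl ⟨u⁻¹, rfl⟩
  · rintro (⟨v', h⟩ | h | h) <;> rw [Prod.mk.injEq] at h <;> obtain ⟨rfl, rfl⟩ := h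
    · exact ⟨by simp [Prod.ext_iff, S.ie_ne_jf], Or.inl S.hef0⟩
    · exact ⟨by simp [Prod.ext_iff, Ne.symm S.i1_ne_ie],
        Or.inr ((units_mul_eq_one_iff u u⁻¹).mpr rfl)⟩
    · exact ⟨by simp [Prod.ext_iff, Ne.symm hu], Or.inr ((units_mul_eq_one_iff u u⁻¹).mpr rfl)⟩


section Counting

variable [Fintype R] [DecidableEq R]

instance : DecidablePred (fun x : R => IsIdempotentElem x ∧ x ≠ 0) :=
  fun x => decidable_of_iff (x * x = x ∧ x ≠ 0) Iff.rfl

lemma jf_inj : Function.Injective (fun v : Rˣ => ((S.jf, v) : NzIdem R × Rˣ)) :=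
  fun _ _ h => congrArg Prod.snd h

lemma deg_i1_self (u : Rˣ) (hu : u⁻¹ = u) :
    ((Cl2 R).neighborSet (S.i1, u)).ncard = 2 := by
  rw [S.nbhd_i1_self u hu]
  exact Set.ncard_pair (by simp [Prod.ext_iff, S.ie_ne_jf])

lemma deg_i1_ns (u : Rˣ) (hu : u⁻¹ ≠ u) :
    ((Cl2 R).neighborSet (S.i1, u)).ncard = 3 := by
  rw [S.nbhd_i1_ns u hu,
    Set.ncard_insert_of_notMem (by simp [Prod.ext_iff, S.i1_ne_ie, S.i1_ne_jf]),
    Set.ncard_pair (by simp [Prod.ext_iff, S.ie_ne_jf])]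

lemma deg_ie_self (u : Rˣ) (hu : u⁻¹ = u) :
    ((Cl2 R).neighborSet (S.ie, u)).ncard = Nat.card Rˣ + 1 := by
  rw [S.nbhd_ie_self u hu,
    Set.ncard_union_eq (by
      rw [Set.disjoint_left]
      rintro _ ⟨v', rfl⟩ hmem
      rw [Set.mem_singleton_iff, Prod.mk.injEq] at hmem
      exact S.i1_ne_jf hmem.1.symm),
    ← Set.image_univ, Set.ncard_image_of_injective _ S.jf_inj, Set.ncard_univ,
    Set.ncard_singleton]

lemma deg_ie_ns (u : Rˣ) (hu : u⁻¹ ≠ u) :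
    ((Cl2 R).neighborSet (S.ie, u)).ncard = Nat.card Rˣ + 2 := by
  rw [S.nbhd_ie_ns u hu,
    Set.ncard_union_eq (by
      rw [Set.disjoint_left]
      rintro _ ⟨v', rfl⟩ hmem
      rw [Set.mem_insert_iff, Set.mem_singleton_iff, Prod.mk.injEq, Prod.mk.injEq] at hmem
      rcases hmem with h | h
      · exact S.i1_ne_jf h.1.symm
      · exact S.ie_ne_jf h.1.symm),
    ← Set.image_univ, Set.ncard_image_of_injective _ S.jf_inj, Set.ncard_univ,
    Set.ncard_pair (by simp [Prod.ext_iff, S.i1_ne_ie])]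

lemma deg_jf_self (u : Rˣ) (hu : u⁻¹ = u) :
    ((Cl2 R).neighborSet (S.jf, u)).ncard = Nat.card Rˣ + 1 := by
  have := S.swap.deg_ie_self u hu; rwa [swap_ie] at this

lemma deg_jf_ns (u : Rˣ) (hu : u⁻¹ ≠ u) :
    ((Cl2 R).neighborSet (S.jf, u)).ncard = Nat.card Rˣ + 2 := by
  have := S.swap.deg_ie_ns u hu; rwa [swap_ie] at this

lemma sum_nbhd_i1_self (u : Rˣ) (hu : u⁻¹ = u) (h : NzIdem R × Rˣ → ℝ) :
    ∑ w : (Cl2 R).neighborSet (S.i1, u), h w = h (S.ie, u) + h (S.jf, u) := by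
  rw [← finsum_eq_sum_of_fintype, finsum_set_coe_eq_finsum_mem, S.nbhd_i1_self u hu,
    finsum_mem_pair (by simp [Prod.ext_iff, S.ie_ne_jf])]

lemma sum_nbhd_i1_ns (u : Rˣ) (hu : u⁻¹ ≠ u) (h : NzIdem R × Rˣ → ℝ) :
    ∑ w : (Cl2 R).neighborSet (S.i1, u), h w
      = h (S.i1, u⁻¹) + (h (S.ie, u⁻¹) + h (S.jf, u⁻¹)) := by
  rw [← finsum_eq_sum_of_fintype, finsum_set_coe_eq_finsum_mem, S.nbhd_i1_ns u hu,
    Set.insert_eq, finsum_mem_union (by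
      rw [Set.disjoint_left]
      rintro _ rfl hmem
      rw [Set.mem_insert_iff, Set.mem_singleton_iff, Prod.mk.injEq, Prod.mk.injEq] at hmem
      rcases hmem with h' | h'
      · exact S.i1_ne_ie h'.1
      · exact S.i1_ne_jf h'.1) (Set.toFinite _) (Set.toFinite _),
    finsum_mem_singleton, finsum_mem_pair (by simp [Prod.ext_iff, S.ie_ne_jf])]

lemma sum_nbhd_ie_self (u : Rˣ) (hu : u⁻¹ = u) (h : NzIdem R × Rˣ → ℝ) :
    ∑ w : (Cl2 R).neighborSet (S.ie, u), h w
      = (∑ v : Rˣ, h (S.jf, v)) + h (S.i1, u) := by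
  rw [← finsum_eq_sum_of_fintype, finsum_set_coe_eq_finsum_mem, S.nbhd_ie_self u hu,
    finsum_mem_union (by
      rw [Set.disjoint_left]
      rintro _ ⟨v', rfl⟩ hmem
      rw [Set.mem_singleton_iff, Prod.mk.injEq] at hmem
      exact S.i1_ne_jf hmem.1.symm) (Set.toFinite _) (Set.toFinite _),
    finsum_mem_range S.jf_inj, finsum_mem_singleton, finsum_eq_sum_of_fintype]

lemma sum_nbhd_ie_ns (u : Rˣ) (hu : u⁻¹ ≠ u) (h : NzIdem R × Rˣ → ℝ) :
    ∑ w : (Cl2 R).neighborSet (S.ie, u), h w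
      = (∑ v : Rˣ, h (S.jf, v)) + (h (S.i1, u⁻¹) + h (S.ie, u⁻¹)) := by
  rw [← finsum_eq_sum_of_fintype, finsum_set_coe_eq_finsum_mem, S.nbhd_ie_ns u hu,
    finsum_mem_union (by
      rw [Set.disjoint_left]
      rintro _ ⟨v', rfl⟩ hmem
      rw [Set.mem_insert_iff, Set.mem_singleton_iff, Prod.mk.injEq, Prod.mk.injEq] at hmem
      rcases hmem with h' | h'
      · exact S.i1_ne_jf h'.1.symm
      · exact S.ie_ne_jf h'.1.symm) (Set.toFinite _) (Set.toFinite _),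
    finsum_mem_range S.jf_inj, finsum_eq_sum_of_fintype,
    finsum_mem_pair (by simp [Prod.ext_iff, S.i1_ne_ie])]

lemma sum_nbhd_jf_self (u : Rˣ) (hu : u⁻¹ = u) (h : NzIdem R × Rˣ → ℝ) :
    ∑ w : (Cl2 R).neighborSet (S.jf, u), h w
      = (∑ v : Rˣ, h (S.ie, v)) + h (S.i1, u) := by
  have := S.swap.sum_nbhd_ie_self u hu h
  rwa [swap_ie, swap_jf, swap_i1] at this

lemma sum_nbhd_jf_ns (u : Rˣ) (hu : u⁻¹ ≠ u) (h : NzIdem R × Rˣ → ℝ) :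
    ∑ w : (Cl2 R).neighborSet (S.jf, u), h w
      = (∑ v : Rˣ, h (S.ie, v)) + (h (S.i1, u⁻¹) + h (S.jf, u⁻¹)) := by
  have := S.swap.sum_nbhd_ie_ns u hu h
  rwa [swap_ie, swap_jf, swap_i1] at this

lemma univ_nzidem : (Finset.univ : Finset (NzIdem R)) = {S.i1, S.ie, S.jf} := by
  ext j
  simp only [Finset.mem_univ, Finset.mem_insert, Finset.mem_singleton, true_iff]
  exact S.classify j

end Counting

end Cl2Setup

noncomputable def Fs (a b : ℕ) : ℝ := Real.sqrt ((a : ℝ) ^ 2 + (b : ℝ) ^ 2)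

lemma Fs_self (a : ℕ) : Fs a a = (a : ℝ) * Real.sqrt 2 := by
  rw [Fs, show ((a:ℝ))^2 + (a:ℝ)^2 = (a:ℝ)^2 * 2 by ring,
    Real.sqrt_mul (sq_nonneg _), Real.sqrt_sq (by positivity)]

theorem cl2_sombor (R : Type*) [CommRing R] [Fintype R] [DecidableEq R] (S : Cl2Setup R) :
    somborIndex (Cl2 R) =
      3 / 2 * Real.sqrt 2 * ((Nat.card Rˣ : ℝ) - (Nat.card {u : Rˣ // u ^ 2 = 1} : ℝ))
      + 2 * (Nat.card {u : Rˣ // u ^ 2 = 1} : ℝ) *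
          Real.sqrt (4 + (1 + (Nat.card Rˣ : ℝ)) ^ 2)
      + 2 * ((Nat.card Rˣ : ℝ) - (Nat.card {u : Rˣ // u ^ 2 = 1} : ℝ)) *
          Real.sqrt (9 + (2 + (Nat.card Rˣ : ℝ)) ^ 2)
      + Real.sqrt 2 * ((Nat.card Rˣ : ℝ) - (Nat.card {u : Rˣ // u ^ 2 = 1} : ℝ)) *
          (2 + (Nat.card Rˣ : ℝ)) *
          ((Nat.card Rˣ : ℝ) - (Nat.card {u : Rˣ // u ^ 2 = 1} : ℝ) + 1)
      + (Nat.card {u : Rˣ // u ^ 2 = 1} : ℝ) ^ 2 * Real.sqrt 2 * (1 + (Nat.card Rˣ : ℝ))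
      + 2 * (Nat.card {u : Rˣ // u ^ 2 = 1} : ℝ) *
          ((Nat.card Rˣ : ℝ) - (Nat.card {u : Rˣ // u ^ 2 = 1} : ℝ)) *
          Real.sqrt (2 * (Nat.card Rˣ : ℝ) ^ 2 + 6 * (Nat.card Rˣ : ℝ) + 5) := by
  classical
  set G := Cl2 R with hG
  set φn := Nat.card Rˣ with hφn
  set d : NzIdem R × Rˣ → ℕ := fun x => (G.neighborSet x).ncard with hd
  set Pf : Finset Rˣ := Finset.univ.filter (fun u : Rˣ => u⁻¹ = u) with hPf
  set rn := Pf.card with hrn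
  have hPN : rn + (Finset.univ.filter (fun u : Rˣ => ¬ u⁻¹ = u)).card = φn := by
    rw [hrn, hPf, Finset.card_filter_add_card_filter_not, Finset.card_univ,
      hφn, Nat.card_eq_fintype_card]
  have hrle : rn ≤ φn := by omega
  have hNcard : (Finset.univ.filter (fun u : Rˣ => ¬ u⁻¹ = u)).card = φn - rn := by omega
  have hrcard : (Nat.card {u : Rˣ // u ^ 2 = 1}) = rn := by
    rw [Nat.card_eq_fintype_card, Fintype.card_subtype, hrn, hPf]
    congr 1
    apply Finset.filter_congr
    intro u _
    rw [pow_two]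
    exact mul_eq_one_iff_inv_eq
  have hgab : ∀ a b : NzIdem R × Rˣ,
      (Sym2.lift
        ⟨fun u v =>
          Real.sqrt (((G.neighborSet u).ncard : ℝ) ^ 2 + ((G.neighborSet v).ncard : ℝ) ^ 2),
          fun u v => by simp [add_comm]⟩ : Sym2 (NzIdem R × Rˣ) → ℝ) s(a, b)
        = Fs (d a) (d b) := fun a b => rfl
  have hSO : somborIndex G * 2 = ∑ v, ∑ w : G.neighborSet v, Fs (d v) (d w) := by
    rw [somborIndex, ← SimpleGraph.coe_edgeFinset, finsum_mem_coe_finset, mul_comm,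
      two_mul_sum_edges]
    exact Finset.sum_congr rfl fun v _ => Finset.sum_congr rfl fun w _ => hgab v w
  -- degree facts
  have hiv : ∀ u : Rˣ, (u⁻¹⁻¹ = u⁻¹) ↔ (u⁻¹ = u) := fun u => by rw [inv_inv, eq_comm]
  have hdi1s : ∀ u : Rˣ, u⁻¹ = u → d (S.i1, u) = 2 := fun u hu => S.deg_i1_self u hu
  have hdi1n : ∀ u : Rˣ, u⁻¹ ≠ u → d (S.i1, u) = 3 := fun u hu => S.deg_i1_ns u hu
  have hdies : ∀ u : Rˣ, u⁻¹ = u → d (S.ie, u) = φn + 1 := fun u hu => S.deg_ie_self u hu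
  have hdien : ∀ u : Rˣ, u⁻¹ ≠ u → d (S.ie, u) = φn + 2 := fun u hu => S.deg_ie_ns u hu
  have hdjfs : ∀ u : Rˣ, u⁻¹ = u → d (S.jf, u) = φn + 1 := fun u hu => S.deg_jf_self u hu
  have hdjfn : ∀ u : Rˣ, u⁻¹ ≠ u → d (S.jf, u) = φn + 2 := fun u hu => S.deg_jf_ns u hu
  -- layer sums
  have hlayf : ∀ a : ℕ, (∑ v : Rˣ, Fs a (d (S.jf, v)))
      = rn * Fs a (φn + 1) + ((φn - rn : ℕ) : ℝ) * Fs a (φn + 2) := by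
    intro a
    rw [← Finset.sum_filter_add_sum_filter_not Finset.univ (fun u : Rˣ => u⁻¹ = u)
      (fun v => Fs a (d (S.jf, v)))]
    have e1 : ∑ v ∈ Finset.univ.filter (fun u : Rˣ => u⁻¹ = u), Fs a (d (S.jf, v))
        = ∑ _v ∈ Finset.univ.filter (fun u : Rˣ => u⁻¹ = u), Fs a (φn + 1) :=
      Finset.sum_congr rfl fun v hv => by rw [hdjfs v (Finset.mem_filter.mp hv).2]
    have e2 : ∑ v ∈ Finset.univ.filter (fun u : Rˣ => ¬u⁻¹ = u), Fs a (d (S.jf, v))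
        = ∑ _v ∈ Finset.univ.filter (fun u : Rˣ => ¬u⁻¹ = u), Fs a (φn + 2) :=
      Finset.sum_congr rfl fun v hv => by rw [hdjfn v (Finset.mem_filter.mp hv).2]
    rw [e1, e2, Finset.sum_const, Finset.sum_const, hNcard, ← hPf, ← hrn,
      nsmul_eq_mul, nsmul_eq_mul]
  have hlaye : ∀ a : ℕ, (∑ v : Rˣ, Fs a (d (S.ie, v)))
      = rn * Fs a (φn + 1) + ((φn - rn : ℕ) : ℝ) * Fs a (φn + 2) := by
    intro a
    rw [← Finset.sum_filter_add_sum_filter_not Finset.univ (fun u : Rˣ => u⁻¹ = u)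
      (fun v => Fs a (d (S.ie, v)))]
    have e1 : ∑ v ∈ Finset.univ.filter (fun u : Rˣ => u⁻¹ = u), Fs a (d (S.ie, v))
        = ∑ _v ∈ Finset.univ.filter (fun u : Rˣ => u⁻¹ = u), Fs a (φn + 1) :=
      Finset.sum_congr rfl fun v hv => by rw [hdies v (Finset.mem_filter.mp hv).2]
    have e2 : ∑ v ∈ Finset.univ.filter (fun u : Rˣ => ¬u⁻¹ = u), Fs a (d (S.ie, v))
        = ∑ _v ∈ Finset.univ.filter (fun u : Rˣ => ¬u⁻¹ = u), Fs a (φn + 2) :=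
      Finset.sum_congr rfl fun v hv => by rw [hdien v (Finset.mem_filter.mp hv).2]
    rw [e1, e2, Finset.sum_const, Finset.sum_const, hNcard, ← hPf, ← hrn,
      nsmul_eq_mul, nsmul_eq_mul]
  -- the three column sums
  have hA1 : (∑ u : Rˣ, ∑ w : G.neighborSet (S.i1, u), Fs (d (S.i1, u)) (d w))
      = rn * (2 * Fs 2 (φn + 1)) + ((φn - rn : ℕ) : ℝ) * (Fs 3 3 + 2 * Fs 3 (φn + 2)) := by
    rw [← Finset.sum_filter_add_sum_filter_not Finset.univ (fun u : Rˣ => u⁻¹ = u)]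
    have e1 : ∑ u ∈ Finset.univ.filter (fun u : Rˣ => u⁻¹ = u),
        (∑ w : G.neighborSet (S.i1, u), Fs (d (S.i1, u)) (d w))
        = ∑ _u ∈ Finset.univ.filter (fun u : Rˣ => u⁻¹ = u), (2 * Fs 2 (φn + 1)) := by
      refine Finset.sum_congr rfl fun u hu => ?_
      have hu' : u⁻¹ = u := (Finset.mem_filter.mp hu).2
      rw [S.sum_nbhd_i1_self u hu' (fun w => Fs (d (S.i1, u)) (d w)),
        hdi1s u hu', hdies u hu', hdjfs u hu']
      ring
    have e2 : ∑ u ∈ Finset.univ.filter (fun u : Rˣ => ¬u⁻¹ = u),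
        (∑ w : G.neighborSet (S.i1, u), Fs (d (S.i1, u)) (d w))
        = ∑ _u ∈ Finset.univ.filter (fun u : Rˣ => ¬u⁻¹ = u),
            (Fs 3 3 + 2 * Fs 3 (φn + 2)) := by
      refine Finset.sum_congr rfl fun u hu => ?_
      have hu' : u⁻¹ ≠ u := (Finset.mem_filter.mp hu).2
      have hu'' : u⁻¹⁻¹ ≠ u⁻¹ := fun hc => hu' ((hiv u).mp hc)
      rw [S.sum_nbhd_i1_ns u hu' (fun w => Fs (d (S.i1, u)) (d w)),
        hdi1n u hu', hdi1n u⁻¹ hu'', hdien u⁻¹ hu'', hdjfn u⁻¹ hu'']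
      ring
    rw [e1, e2, Finset.sum_const, Finset.sum_const, hNcard, ← hPf, ← hrn,
      nsmul_eq_mul, nsmul_eq_mul]
  have hAe : (∑ u : Rˣ, ∑ w : G.neighborSet (S.ie, u), Fs (d (S.ie, u)) (d w))
      = rn * ((rn * Fs (φn + 1) (φn + 1) + ((φn - rn : ℕ) : ℝ) * Fs (φn + 1) (φn + 2))
            + Fs (φn + 1) 2)
        + ((φn - rn : ℕ) : ℝ) *
          ((rn * Fs (φn + 2) (φn + 1) + ((φn - rn : ℕ) : ℝ) * Fs (φn + 2) (φn + 2))
            + (Fs (φn + 2) 3 + Fs (φn + 2) (φn + 2))) := by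
    rw [← Finset.sum_filter_add_sum_filter_not Finset.univ (fun u : Rˣ => u⁻¹ = u)]
    have e1 : ∑ u ∈ Finset.univ.filter (fun u : Rˣ => u⁻¹ = u),
        (∑ w : G.neighborSet (S.ie, u), Fs (d (S.ie, u)) (d w))
        = ∑ _u ∈ Finset.univ.filter (fun u : Rˣ => u⁻¹ = u),
            ((rn * Fs (φn + 1) (φn + 1) + ((φn - rn : ℕ) : ℝ) * Fs (φn + 1) (φn + 2))
              + Fs (φn + 1) 2) := by
      refine Finset.sum_congr rfl fun u hu => ?_
      have hu' : u⁻¹ = u := (Finset.mem_filter.mp hu).2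
      rw [S.sum_nbhd_ie_self u hu' (fun w => Fs (d (S.ie, u)) (d w)),
        hdies u hu', hlayf (φn + 1), hdi1s u hu']
    have e2 : ∑ u ∈ Finset.univ.filter (fun u : Rˣ => ¬u⁻¹ = u),
        (∑ w : G.neighborSet (S.ie, u), Fs (d (S.ie, u)) (d w))
        = ∑ _u ∈ Finset.univ.filter (fun u : Rˣ => ¬u⁻¹ = u),
            ((rn * Fs (φn + 2) (φn + 1) + ((φn - rn : ℕ) : ℝ) * Fs (φn + 2) (φn + 2))
              + (Fs (φn + 2) 3 + Fs (φn + 2) (φn + 2))) := by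
      refine Finset.sum_congr rfl fun u hu => ?_
      have hu' : u⁻¹ ≠ u := (Finset.mem_filter.mp hu).2
      have hu'' : u⁻¹⁻¹ ≠ u⁻¹ := fun hc => hu' ((hiv u).mp hc)
      rw [S.sum_nbhd_ie_ns u hu' (fun w => Fs (d (S.ie, u)) (d w)),
        hdien u hu', hlayf (φn + 2), hdi1n u⁻¹ hu'', hdien u⁻¹ hu'']
    rw [e1, e2, Finset.sum_const, Finset.sum_const, hNcard, ← hPf, ← hrn,
      nsmul_eq_mul, nsmul_eq_mul]
  have hAf : (∑ u : Rˣ, ∑ w : G.neighborSet (S.jf, u), Fs (d (S.jf, u)) (d w))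
      = rn * ((rn * Fs (φn + 1) (φn + 1) + ((φn - rn : ℕ) : ℝ) * Fs (φn + 1) (φn + 2))
            + Fs (φn + 1) 2)
        + ((φn - rn : ℕ) : ℝ) *
          ((rn * Fs (φn + 2) (φn + 1) + ((φn - rn : ℕ) : ℝ) * Fs (φn + 2) (φn + 2))
            + (Fs (φn + 2) 3 + Fs (φn + 2) (φn + 2))) := by
    rw [← Finset.sum_filter_add_sum_filter_not Finset.univ (fun u : Rˣ => u⁻¹ = u)]
    have e1 : ∑ u ∈ Finset.univ.filter (fun u : Rˣ => u⁻¹ = u),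
        (∑ w : G.neighborSet (S.jf, u), Fs (d (S.jf, u)) (d w))
        = ∑ _u ∈ Finset.univ.filter (fun u : Rˣ => u⁻¹ = u),
            ((rn * Fs (φn + 1) (φn + 1) + ((φn - rn : ℕ) : ℝ) * Fs (φn + 1) (φn + 2))
              + Fs (φn + 1) 2) := by
      refine Finset.sum_congr rfl fun u hu => ?_
      have hu' : u⁻¹ = u := (Finset.mem_filter.mp hu).2
      rw [S.sum_nbhd_jf_self u hu' (fun w => Fs (d (S.jf, u)) (d w)),
        hdjfs u hu', hlaye (φn + 1), hdi1s u hu']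
    have e2 : ∑ u ∈ Finset.univ.filter (fun u : Rˣ => ¬u⁻¹ = u),
        (∑ w : G.neighborSet (S.jf, u), Fs (d (S.jf, u)) (d w))
        = ∑ _u ∈ Finset.univ.filter (fun u : Rˣ => ¬u⁻¹ = u),
            ((rn * Fs (φn + 2) (φn + 1) + ((φn - rn : ℕ) : ℝ) * Fs (φn + 2) (φn + 2))
              + (Fs (φn + 2) 3 + Fs (φn + 2) (φn + 2))) := by
      refine Finset.sum_congr rfl fun u hu => ?_
      have hu' : u⁻¹ ≠ u := (Finset.mem_filter.mp hu).2
      have hu'' : u⁻¹⁻¹ ≠ u⁻¹ := fun hc => hu' ((hiv u).mp hc)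
      rw [S.sum_nbhd_jf_ns u hu' (fun w => Fs (d (S.jf, u)) (d w)),
        hdjfn u hu', hlaye (φn + 2), hdi1n u⁻¹ hu'', hdjfn u⁻¹ hu'']
    rw [e1, e2, Finset.sum_const, Finset.sum_const, hNcard, ← hPf, ← hrn,
      nsmul_eq_mul, nsmul_eq_mul]
  have hT : somborIndex G * 2
      = (rn * (2 * Fs 2 (φn + 1)) + ((φn - rn : ℕ) : ℝ) * (Fs 3 3 + 2 * Fs 3 (φn + 2)))
        + ((rn * ((rn * Fs (φn + 1) (φn + 1) + ((φn - rn : ℕ) : ℝ) * Fs (φn + 1) (φn + 2))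
              + Fs (φn + 1) 2)
          + ((φn - rn : ℕ) : ℝ) *
            ((rn * Fs (φn + 2) (φn + 1) + ((φn - rn : ℕ) : ℝ) * Fs (φn + 2) (φn + 2))
              + (Fs (φn + 2) 3 + Fs (φn + 2) (φn + 2))))
          + (rn * ((rn * Fs (φn + 1) (φn + 1) + ((φn - rn : ℕ) : ℝ) * Fs (φn + 1) (φn + 2))
              + Fs (φn + 1) 2)
            + ((φn - rn : ℕ) : ℝ) *
              ((rn * Fs (φn + 2) (φn + 1) + ((φn - rn : ℕ) : ℝ) * Fs (φn + 2) (φn + 2))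
                + (Fs (φn + 2) 3 + Fs (φn + 2) (φn + 2))))) := by
    rw [hSO, Fintype.sum_prod_type, S.univ_nzidem,
      Finset.sum_insert (by simp [Finset.mem_insert, S.i1_ne_ie, S.i1_ne_jf]),
      Finset.sum_insert (by simp [S.ie_ne_jf]),
      Finset.sum_singleton, hA1, hAe, hAf]
  -- conversions of the square roots
  have c1 : Fs 2 (φn + 1) = Real.sqrt (4 + (1 + (φn : ℝ)) ^ 2) := by
    unfold Fs; congr 1; push_cast; ring
  have c2 : Fs (φn + 1) 2 = Real.sqrt (4 + (1 + (φn : ℝ)) ^ 2) := by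
    unfold Fs; congr 1; push_cast; ring
  have c3 : Fs 3 (φn + 2) = Real.sqrt (9 + (2 + (φn : ℝ)) ^ 2) := by
    unfold Fs; congr 1; push_cast; ring
  have c4 : Fs (φn + 2) 3 = Real.sqrt (9 + (2 + (φn : ℝ)) ^ 2) := by
    unfold Fs; congr 1; push_cast; ring
  have c5 : Fs (φn + 1) (φn + 2)
      = Real.sqrt (2 * (φn : ℝ) ^ 2 + 6 * (φn : ℝ) + 5) := by
    unfold Fs; congr 1; push_cast; ring
  have c6 : Fs (φn + 2) (φn + 1)
      = Real.sqrt (2 * (φn : ℝ) ^ 2 + 6 * (φn : ℝ) + 5) := by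
    unfold Fs; congr 1; push_cast; ring
  rw [Fs_self 3, Fs_self (φn + 1), Fs_self (φn + 2), c1, c2, c3, c4, c5, c6,
    Nat.cast_sub hrle] at hT
  rw [hrcard]
  push_cast at hT ⊢
  linear_combination hT / 2

theorem sombor_two_prime_powers (p q : ℕ) (hp : p.Prime) (hq : q.Prime) (hpq : p ≠ q)
    (α β : ℕ) (hα : 0 < α) (hβ : 0 < β) (n : ℕ) (hn : n = p ^ α * q ^ β)
    (r : ℕ) (hr : r = Nat.card {u : (ZMod n)ˣ // u ^ 2 = 1}) :
    somborIndex (Cl2 (ZMod n)) =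
      3 / 2 * Real.sqrt 2 * ((n.totient : ℝ) - r)
      + 2 * r * Real.sqrt (4 + (1 + (n.totient : ℝ)) ^ 2)
      + 2 * ((n.totient : ℝ) - r) * Real.sqrt (9 + (2 + (n.totient : ℝ)) ^ 2)
      + Real.sqrt 2 * ((n.totient : ℝ) - r) * (2 + (n.totient : ℝ)) * ((n.totient : ℝ) - r + 1)
      + (r : ℝ) ^ 2 * Real.sqrt 2 * (1 + (n.totient : ℝ))
      + 2 * r * ((n.totient : ℝ) - r) *
          Real.sqrt (2 * (n.totient : ℝ) ^ 2 + 6 * (n.totient : ℝ) + 5) := by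
  subst hn
  subst hr
  haveI h1 : NeZero (p ^ α * q ^ β) := ⟨(Nat.mul_pos (pow_pos hp.pos α) (pow_pos hq.pos β)).ne'⟩
  haveI : NeZero (p ^ α) := ⟨(pow_pos hp.pos α).ne'⟩
  haveI : NeZero (q ^ β) := ⟨(pow_pos hq.pos β).ne'⟩
  haveI h2 : Fact (1 < p ^ α) := ⟨Nat.one_lt_pow hα.ne' hp.one_lt⟩
  haveI h3 : Fact (1 < q ^ β) := ⟨Nat.one_lt_pow hβ.ne' hq.one_lt⟩
  have hco : Nat.Coprime (p ^ α) (q ^ β) :=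
    Nat.Coprime.pow _ _ ((Nat.coprime_primes hp hq).mpr hpq)
  set ψ := ZMod.chineseRemainder hco with hψ
  set E : ZMod (p ^ α * q ^ β) := ψ.symm (1, 0) with hE
  set F : ZMod (p ^ α * q ^ β) := ψ.symm (0, 1) with hF
  have hψE : ψ E = (1, 0) := ψ.apply_symm_apply _
  have hψF : ψ F = (0, 1) := ψ.apply_symm_apply _
  have hinj : Function.Injective ψ := ψ.injective
  have heIdem : IsIdempotentElem E := by
    apply hinj
    rw [map_mul, hψE]
    ext <;> simp
  have hfIdem : IsIdempotentElem F := by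
    apply hinj
    rw [map_mul, hψF]
    ext <;> simp
  have he0 : E ≠ 0 := by
    intro h
    have := congrArg ψ h
    rw [hψE, map_zero] at this
    exact one_ne_zero (congrArg Prod.fst this)
  have hf0 : F ≠ 0 := by
    intro h
    have := congrArg ψ h
    rw [hψF, map_zero] at this
    exact one_ne_zero (congrArg Prod.snd this)
  have he1 : E ≠ 1 := by
    intro h
    have := congrArg ψ h
    rw [hψE, map_one] at this
    exact zero_ne_one (congrArg Prod.snd this)
  have hf1 : F ≠ 1 := by
    intro h
    have := congrArg ψ h
    rw [hψF, map_one] at this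
    exact zero_ne_one (congrArg Prod.fst this)
  have hef : E ≠ F := by
    intro h
    have := congrArg ψ h
    rw [hψE, hψF] at this
    exact one_ne_zero (congrArg Prod.fst this)
  have hef0 : E * F = 0 := by
    apply hinj
    rw [map_mul, hψE, hψF, map_zero]
    ext <;> simp
  have hclass : ∀ x : ZMod (p ^ α * q ^ β),
      IsIdempotentElem x → x ≠ 0 → x = 1 ∨ x = E ∨ x = F := by
    intro x hx hx0
    have hxx : ψ x * ψ x = ψ x := by rw [← map_mul, hx.eq]
    have h1' := zmod_pp_idem hp hα (ψ x).1 (congrArg Prod.fst hxx)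
    have h2' := zmod_pp_idem hq hβ (ψ x).2 (congrArg Prod.snd hxx)
    rcases h1' with h1' | h1' <;> rcases h2' with h2' | h2'
    · exfalso
      apply hx0
      apply hinj
      rw [map_zero]
      exact Prod.ext h1' h2'
    · right; right
      apply hinj
      rw [hψF]
      exact Prod.ext h1' h2'
    · right; left
      apply hinj
      rw [hψE]
      exact Prod.ext h1' h2'
    · left
      apply hinj
      rw [map_one]
      exact Prod.ext h1' h2'
  have key := cl2_sombor (ZMod (p ^ α * q ^ β))
    ⟨E, F, heIdem, hfIdem, he0, hf0, he1, hf1, hef, hef0, hclass⟩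
  have hcard : Nat.card (ZMod (p ^ α * q ^ β))ˣ = (p ^ α * q ^ β).totient := by
    rw [Nat.card_eq_fintype_card, ZMod.card_units_eq_totient]
  rw [key, hcard]
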